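/- Two connected finite graphs G and H are CR-similar (the sets {C_G(x) : x ∈ V(G)} and {C_H(y) : y ∈ V(H)} of full color-refinement color sequences are equal) if and only if these sets have nonempty intersection, i.e., some vertex of G and some vertex of H receive the same color sequence. -/

import Mathlib

/-- The type of colors at round `r` of color refinement. -/
def CType : ℕ → Type
  | 0 => Unit
  | r + 1 => Multiset (CType r)

/-- The color of vertex `x` after `r` rounds of color refinement on `G`. -/
noncomputable def crColor {V : Type*} [Fintype V] (G : SimpleGraph V) :
    (r : ℕ) → V → CType r
  | 0, _ => ()
  | r + 1, x => ((G.neighborSet x).toFinite.toFinset).val.map (crColor G r)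

/-- The full color-refinement color sequence of a vertex. -/
noncomputable def crSeq {V : Type*} [Fintype V] (G : SimpleGraph V) (x : V) :
    (r : ℕ) → CType r :=
  fun r => crColor G r x

/-- The set of full color sequences arising at vertices of `G`. -/
noncomputable def crSet {V : Type*} [Fintype V] (G : SimpleGraph V) :
    Set ((r : ℕ) → CType r) :=
  Set.range (crSeq G)

/-- Truncation of a color to the previous round. -/
def CTrunc : (s : ℕ) → CType (s + 1) → CType s
  | 0, _ => ()
  | s + 1, m => (show Multiset (CType (s+1)) from m).map (CTrunc s)

lemma crColor_succ {V : Type*} [Fintype V] (G : SimpleGraph V) (r : ℕ) (x : V) :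
    crColor G (r+1) x = ((G.neighborSet x).toFinite.toFinset).val.map (crColor G r) := rfl

lemma ctrunc_crColor {V : Type*} [Fintype V] (G : SimpleGraph V) :
    ∀ (s : ℕ) (x : V), CTrunc s (crColor G (s+1) x) = crColor G s x
  | 0, _ => rfl
  | s + 1, x => by
      show (Multiset.map (crColor G (s+1)) _).map (CTrunc s) = _
      rw [Multiset.map_map, crColor_succ]
      exact Multiset.map_congr rfl (fun y _ => ctrunc_crColor G s y)

lemma crColor_mono {VG VH : Type*} [Fintype VG] [Fintype VH]
    (G : SimpleGraph VG) (H : SimpleGraph VH)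
    {s t : ℕ} (h : t ≤ s) {x : VG} {y : VH}
    (he : crColor G s x = crColor H s y) : crColor G t x = crColor H t y := by
  induction s with
  | zero =>
    obtain rfl : t = 0 := Nat.le_zero.mp h
    exact he
  | succ s ih =>
    rcases Nat.lt_or_ge t (s+1) with h' | h'
    · apply ih (Nat.lt_succ_iff.mp h')
      have := congrArg (CTrunc s) he
      rwa [ctrunc_crColor, ctrunc_crColor] at this
    · obtain rfl : t = s + 1 := le_antisymm h h'
      exact he

lemma neighbor_push {VG VH : Type*} [Fintype VG] [Fintype VH]
    (G : SimpleGraph VG) (H : SimpleGraph VH)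
    {u x' : VG} {v : VH}
    (h : crSeq G u = crSeq H v) (ha : G.Adj u x') :
    ∃ y', H.Adj v y' ∧ crSeq G x' = crSeq H y' := by
  have key : ∀ s : ℕ, ∃ y', H.Adj v y' ∧ ∀ t ≤ s, crColor G t x' = crColor H t y' := by
    intro s
    have h1 : crColor G (s+1) u = crColor H (s+1) v := congrFun h (s+1)
    have h2 : (crColor G s x') ∈
        Multiset.map (crColor H s) ((H.neighborSet v).toFinite.toFinset).val := by
      rw [← crColor_succ, ← h1, crColor_succ]
      apply Multiset.mem_map_of_mem
      rw [Finset.mem_val, Set.Finite.mem_toFinset]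
      exact ha
    obtain ⟨y', hy'mem, hy'eq⟩ := Multiset.mem_map.mp h2
    have hadj : H.Adj v y' := by
      rw [Finset.mem_val, Set.Finite.mem_toFinset] at hy'mem
      exact hy'mem
    exact ⟨y', hadj, fun t ht => crColor_mono G H ht hy'eq.symm⟩
  choose f hadj hcol using key
  obtain ⟨y', hy'⟩ := Finite.exists_infinite_fiber f
  have hinf : {s : ℕ | f s = y'}.Infinite := by
    rw [Set.infinite_coe_iff] at hy'
    convert hy' using 1
    rfl
  obtain ⟨s₀, hs₀⟩ := hinf.nonempty
  refine ⟨y', hs₀ ▸ hadj s₀, funext fun t => ?_⟩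
  obtain ⟨s, hs, hts⟩ := hinf.exists_gt t
  have := hcol s t (le_of_lt hts)
  rwa [hs] at this

lemma walk_push {VG VH : Type*} [Fintype VG] [Fintype VH]
    (G : SimpleGraph VG) (H : SimpleGraph VH) :
    ∀ {x x' : VG} (_ : G.Walk x x') {y : VH},
      crSeq G x = crSeq H y → ∃ y', crSeq G x' = crSeq H y'
  | _, _, .nil, y, h => ⟨y, h⟩
  | _, _, .cons ha p, _, h => by
      obtain ⟨y'', _, h''⟩ := neighbor_push G H h ha
      exact walk_push G H p h''

/-- Two connected finite graphs are CR-similar iff their sets of color sequences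
intersect. -/
theorem stmt_7 {VG VH : Type*} [Fintype VG] [Fintype VH]
    (G : SimpleGraph VG) (H : SimpleGraph VH)
    (hG : G.Connected) (hH : H.Connected) :
    crSet G = crSet H ↔ (crSet G ∩ crSet H).Nonempty := by
  constructor
  · intro h
    obtain ⟨x⟩ := hG.nonempty
    exact ⟨crSeq G x, ⟨x, rfl⟩, h ▸ ⟨x, rfl⟩⟩
  · rintro ⟨c, ⟨x, hx⟩, ⟨y, hy⟩⟩
    have hxy : crSeq G x = crSeq H y := hx.trans hy.symm
    apply Set.eq_of_subset_of_subset
    · rintro _ ⟨x', rfl⟩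
      obtain ⟨w⟩ := hG x x'
      obtain ⟨y', h'⟩ := walk_push G H w hxy
      exact ⟨y', h'.symm⟩
    · rintro _ ⟨y', rfl⟩
      obtain ⟨w⟩ := hH y y'
      obtain ⟨x'', h'⟩ := walk_push H G w hxy.symm
      exact ⟨x'', h'.symm⟩
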